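/- The non-adaptive AND decision tree complexity of OMB_n equals n. That is, the minimum size of a family S_1, ..., S_k ⊆ [n] such that the values AND_{S_1}(x), ..., AND_{S_k}(x) determine OMB_n(x) for all x ∈ {0,1}^n is exactly n. -/
import Mathlib


/-- `AND_S(x)` as a Boolean. -/
def andB {n : ℕ} (S : Finset (Fin n)) (x : Fin n → Bool) : Bool :=
  decide (∀ i ∈ S, x i = true)

/-- `𝒮` is an NAADT basis for `f` if the values `AND_S(x)`, `S ∈ 𝒮`, determine `f(x)`. -/
def IsNAADTBasis {n : ℕ} (f : (Fin n → Bool) → Bool) (𝒮 : Finset (Finset (Fin n))) : Prop :=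
  ∀ x y : Fin n → Bool, (∀ S ∈ 𝒮, andB S x = andB S y) → f x = f y

/-- The Odd-Max-Bit function. -/
def OMB (n : ℕ) (x : Fin n → Bool) : Bool :=
  decide (∃ i : Fin n, x i = false ∧ (i.val + 1) % 2 = 1 ∧ ∀ j : Fin n, i < j → x j = true)

lemma andB_w {n : ℕ} (S : Finset (Fin n)) (i : ℕ) :
    andB S (fun j => decide (i ≤ j.val)) = decide (∀ j ∈ S, i ≤ j.val) := by
  simp [andB]

lemma omb_w {n i : ℕ} (hi : i ≤ n) :
    OMB n (fun j => decide (i ≤ j.val)) = decide (i % 2 = 1) := by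
  unfold OMB
  rw [decide_eq_decide]
  constructor
  · rintro ⟨k, hk1, hk2, hk3⟩
    have hk1' : k.val < i := by
      by_contra h
      simp only [decide_eq_false_iff_not, not_le] at hk1
      omega
    have hki : k.val + 1 = i := by
      by_contra h
      have hlt : k.val + 1 < n := by omega
      have := hk3 ⟨k.val + 1, hlt⟩ (by simp [Fin.lt_def])
      simp only [decide_eq_true_eq] at this
      omega
    omega
  · intro hpar
    have h1 : 1 ≤ i := by omega
    refine ⟨⟨i - 1, by omega⟩, by simp; omega, by simp; omega, ?_⟩
    · intro j hj
      simp only [Fin.lt_def] at hj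
      simp
      omega

/-- The non-adaptive AND decision tree complexity of `OMB_n` is exactly `n`. -/
theorem stmt6 (n : ℕ) (hn : 0 < n) :
    (∃ 𝒮 : Finset (Finset (Fin n)), IsNAADTBasis (OMB n) 𝒮 ∧ 𝒮.card = n) ∧
    (∀ 𝒮 : Finset (Finset (Fin n)), IsNAADTBasis (OMB n) 𝒮 → n ≤ 𝒮.card) := by
  constructor
  · refine ⟨Finset.univ.image (fun i => ({i} : Finset (Fin n))), ?_, ?_⟩
    · intro x y h
      have hxy : x = y := by
        funext i
        have := h {i} (Finset.mem_image.mpr ⟨i, Finset.mem_univ i, rfl⟩)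
        simpa [andB] using this
      rw [hxy]
    · rw [Finset.card_image_of_injective _ Finset.singleton_injective,
        Finset.card_univ, Fintype.card_fin]
  · intro 𝒮 hB
    have key : ∀ i : Fin n, ∃ S ∈ 𝒮, i ∈ S ∧ ∀ j ∈ S, i.val ≤ j.val := by
      intro i
      by_contra hcon
      push_neg at hcon
      have heq : OMB n (fun j => decide (i.val ≤ j.val))
          = OMB n (fun j => decide (i.val + 1 ≤ j.val)) := by
        apply hB
        intro S hS
        rw [andB_w, andB_w, decide_eq_decide]
        constructor
        · intro h j hj
          rcases eq_or_lt_of_le (h j hj) with heq' | hlt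
          · exfalso
            have hiS : i ∈ S := by
              have : j = i := Fin.ext heq'.symm
              rwa [this] at hj
            obtain ⟨k, hkS, hk⟩ := hcon S hS hiS
            exact absurd (h k hkS) (by omega)
          · omega
        · intro h j hj
          have := h j hj; omega
      rw [omb_w (le_of_lt i.isLt), omb_w (by omega : i.val + 1 ≤ n),
        decide_eq_decide] at heq
      omega
    choose f hf𝒮 hfmem hfmin using key
    have hinj : Set.InjOn f (Finset.univ : Finset (Fin n)) := by
      intro a _ b _ hab
      have h1 := hfmin a b (by rw [hab]; exact hfmem b)
      have h2 := hfmin b a (by rw [← hab]; exact hfmem a)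
      exact Fin.ext (le_antisymm h1 h2)
    calc n = (Finset.univ : Finset (Fin n)).card := by simp
      _ ≤ 𝒮.card := Finset.card_le_card_of_injOn f (fun i _ => hf𝒮 i) hinj
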